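/- arXiv:2502.17236 — 2 statements merged into one kernel-verified Lean document; each statement's English description precedes it below -/
import Mathlib

section
/- Let $a_1,\dots,a_m \in \mathbb{Z}^2$ be a balanced tuple, i.e. $\sum_{i=1}^{m} a_i = 0$, and let $(b_1,\dots,b_m) = (a_2, a_3, \dots, a_m, a_1)$ be its cyclic rotation. Then $\sum_{2 \leq i < j \leq m} a_i \wedge a_j = \sum_{2 \leq i < j \leq m} b_i \wedge b_j$. Consequently, for a cyclic permutation $\omega$ the quantity $k(\omega) = \sum_{2 \leq i < j \leq m} a_{\tilde\omega(i)} \wedge a_{\tilde\omega(j)}$ does not depend on the choice of ordered representative $\tilde\omega$ of the cyclic orbit $\omega$, i.e. $k(\omega)$ is well defined. -/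
/-- `r ∧ r' = r₁ r₂' - r₂ r₁'`. -/
def wedge (r r' : ℤ × ℤ) : ℤ := r.1 * r'.2 - r.2 * r'.1

/-- The quantity `k = ∑_{2 ≤ i < j ≤ m} aᵢ ∧ aⱼ` attached to a tuple
`a : Fin m → ℤ²` (0-based indices: pairs with `0 < i < j`). -/
def kSum (m : ℕ) (a : Fin m → ℤ × ℤ) : ℤ :=
  ∑ i : Fin m, ∑ j : Fin m, if i < j ∧ 0 < (i : ℕ) then wedge (a i) (a j) else 0

/-- The full pair sum `∑_{1 ≤ i < j ≤ m} aᵢ ∧ aⱼ` (all pairs `i < j`, including `i = 0`). -/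
def Tsum (m : ℕ) (a : Fin m → ℤ × ℤ) : ℤ :=
  ∑ i : Fin m, ∑ j : Fin m, if i < j then wedge (a i) (a j) else 0

lemma wedge_sum_right {ι : Type*} (s : Finset ι) (x : ℤ × ℤ) (f : ι → ℤ × ℤ) :
    wedge x (∑ i ∈ s, f i) = ∑ i ∈ s, wedge x (f i) := by
  simp [wedge, Prod.fst_sum, Prod.snd_sum, Finset.mul_sum, Finset.sum_sub_distrib]

lemma wedge_sum_left {ι : Type*} (s : Finset ι) (x : ℤ × ℤ) (f : ι → ℤ × ℤ) :
    wedge (∑ i ∈ s, f i) x = ∑ i ∈ s, wedge (f i) x := by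
  simp [wedge, Prod.fst_sum, Prod.snd_sum, Finset.sum_mul, Finset.sum_sub_distrib]

lemma wedge_neg_self (x : ℤ × ℤ) : wedge x (-x) = 0 := by simp [wedge]; ring

lemma wedge_neg_self' (x : ℤ × ℤ) : wedge (-x) x = 0 := by simp [wedge]; ring

lemma sum_tail {m : ℕ} (a : Fin (m + 1) → ℤ × ℤ) (ha : ∑ i, a i = 0) :
    ∑ i : Fin m, a i.succ = -a 0 := by
  have h := Fin.sum_univ_succ a
  rw [ha] at h
  linear_combination -h

lemma kSum_eq_Tsum {m : ℕ} (a : Fin (m + 1) → ℤ × ℤ) (ha : ∑ i, a i = 0) :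
    kSum (m + 1) a = Tsum (m + 1) a := by
  rw [kSum, Tsum, Fin.sum_univ_succ, Fin.sum_univ_succ
    (f := fun i => ∑ j, if i < j then wedge (a i) (a j) else 0)]
  have h0 : (∑ j : Fin (m+1), if (0:Fin (m+1)) < j ∧ 0 < ((0:Fin (m+1)) : ℕ) then wedge (a 0) (a j) else 0) = 0 := by
    simp
  have h1 : (∑ j : Fin (m+1), if (0:Fin (m+1)) < j then wedge (a 0) (a j) else 0) = 0 := by
    rw [Fin.sum_univ_succ]
    simp only [Fin.succ_pos, if_pos, lt_self_iff_false, if_false, zero_add]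
    rw [← wedge_sum_right, sum_tail a ha, wedge_neg_self]
  rw [h0, h1, zero_add, zero_add]
  refine Finset.sum_congr rfl fun i _ => Finset.sum_congr rfl fun j _ => ?_
  simp [Fin.succ_pos]

lemma Tsum_shift {m : ℕ} (a : Fin (m + 1) → ℤ × ℤ) (ha : ∑ i, a i = 0) :
    Tsum (m + 1) (fun i => a (i + 1)) = Tsum (m + 1) a := by
  -- LHS: peel off `last` (outer) and `last`/`castSucc` (inner)
  have hL : Tsum (m + 1) (fun i => a (i + 1)) =
      (∑ i : Fin m, ∑ j : Fin m, if i < j then wedge (a i.succ) (a j.succ) else 0)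
      + ∑ i : Fin m, wedge (a i.succ) (a 0) := by
    rw [Tsum, Fin.sum_univ_castSucc
      (f := fun i => ∑ j : Fin (m+1), if i < j then wedge (a (i + 1)) (a (j + 1)) else 0)]
    have hlast : (∑ j : Fin (m+1), if Fin.last m < j then wedge (a (Fin.last m + 1)) (a (j + 1)) else 0) = 0 := by
      apply Finset.sum_eq_zero
      intro j _
      rw [if_neg (not_lt.2 (Fin.le_last j))]
    rw [hlast, add_zero, ← Finset.sum_add_distrib]
    refine Finset.sum_congr rfl fun i _ => ?_
    rw [Fin.sum_univ_castSucc
      (f := fun j : Fin (m+1) => if i.castSucc < j then wedge (a (i.castSucc + 1)) (a (j + 1)) else 0)]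
    congr 1
    · refine Finset.sum_congr rfl fun j _ => ?_
      simp [Fin.castSucc_lt_castSucc_iff, Fin.coeSucc_eq_succ]
    · rw [if_pos (Fin.castSucc_lt_last i)]
      rw [Fin.last_add_one, Fin.coeSucc_eq_succ]
  -- RHS: peel off `0`
  have hR : Tsum (m + 1) a =
      (∑ j : Fin (m+1), if (0:Fin (m+1)) < j then wedge (a 0) (a j) else 0)
      + ∑ i : Fin m, ∑ j : Fin m, if i < j then wedge (a i.succ) (a j.succ) else 0 := by
    rw [Tsum, Fin.sum_univ_succ
      (f := fun i => ∑ j : Fin (m+1), if i < j then wedge (a i) (a j) else 0)]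
    congr 1
    refine Finset.sum_congr rfl fun i _ => ?_
    rw [Fin.sum_univ_succ
      (f := fun j : Fin (m+1) => if i.succ < j then wedge (a i.succ) (a j) else 0)]
    rw [if_neg (Fin.not_lt_zero _), zero_add]
    refine Finset.sum_congr rfl fun j _ => ?_
    simp [Fin.succ_lt_succ_iff]
  have hA : (∑ j : Fin (m+1), if (0:Fin (m+1)) < j then wedge (a 0) (a j) else 0) = 0 := by
    rw [Fin.sum_univ_succ]
    rw [if_neg (lt_irrefl _), zero_add]
    simp only [Fin.succ_pos, if_pos]
    rw [← wedge_sum_right, sum_tail a ha, wedge_neg_self]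
  have hB : (∑ i : Fin m, wedge (a i.succ) (a 0)) = 0 := by
    rw [← wedge_sum_left, sum_tail a ha, wedge_neg_self']
  rw [hL, hR, hA, hB, add_zero, zero_add]

lemma sum_shift {m : ℕ} (a : Fin (m + 1) → ℤ × ℤ) (ha : ∑ i, a i = 0) (c : Fin (m+1)) :
    ∑ i, a (i + c) = 0 := by
  rw [Fintype.sum_equiv (Equiv.addRight c) (fun i => a (i + c)) a (fun i => rfl)]
  exact ha

lemma kSum_shift_one {m : ℕ} (a : Fin (m + 1) → ℤ × ℤ) (ha : ∑ i, a i = 0) :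
    kSum (m + 1) (fun i => a (i + 1)) = kSum (m + 1) a := by
  rw [kSum_eq_Tsum a ha, kSum_eq_Tsum (fun i => a (i + 1)) (sum_shift a ha 1), Tsum_shift a ha]

open Fin.NatCast in
/-- Let `a₁, …, a_m ∈ ℤ²` be a balanced tuple (`∑ aᵢ = 0`) and let
`(b₁, …, b_m) = (a₂, a₃, …, a_m, a₁)` be its cyclic rotation.  Then
`∑_{2 ≤ i < j ≤ m} aᵢ ∧ aⱼ = ∑_{2 ≤ i < j ≤ m} bᵢ ∧ bⱼ`.  Consequently, for a
cyclic permutation `ω` the quantity `k(ω)` does not depend on the choice of ordered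
representative of the cyclic orbit: every cyclic rotation of the tuple gives the same
value.  (We index by `Fin (m+1)`, so tuples are nonempty; `i + c` is cyclic
addition in `Fin (m+1)`.) -/
theorem kSum_cyclic_invariant (m : ℕ) (a : Fin (m + 1) → ℤ × ℤ) (ha : ∑ i, a i = 0) :
    kSum (m + 1) a = kSum (m + 1) (fun i => a (i + 1)) ∧
    ∀ c : Fin (m + 1), kSum (m + 1) (fun i => a (i + c)) = kSum (m + 1) a := by
  have key : ∀ n : ℕ, kSum (m + 1) (fun i => a (i + (n : Fin (m+1)))) = kSum (m + 1) a := by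
    intro n
    induction n with
    | zero => simp
    | succ n ih =>
      have heq : (fun i : Fin (m+1) => a (i + ((n+1 : ℕ) : Fin (m+1)))) =
          (fun i : Fin (m+1) => (fun j : Fin (m+1) => a (j + (n : Fin (m+1)))) (i + 1)) := by
        funext i
        congr 1
        push_cast
        abel
      rw [heq, kSum_shift_one (fun j => a (j + (n : Fin (m+1)))) (sum_shift a ha _), ih]
  refine ⟨(kSum_shift_one a ha).symm, fun c => ?_⟩
  have := key (c : ℕ)
  rwa [Fin.cast_val_eq_self] at this
end

section
/- Fix positive integers $n$ and $N$. There is a unique $\mathbb{C}$-algebra homomorphism $\varphi : \mathbb{C}[t_1,\dots,t_n]/(t_1^{N+1},\dots,t_n^{N+1}) \longrightarrow \tilde R_N = \mathbb{C}[u_{ij} : 1 \leq i \leq n,\ 1 \leq j \leq N]/\langle u_{ij}^2 \rangle$ with $\varphi(t_i) = \sum_{j=1}^{N} u_{ij}$ for each $i$ (in particular $(\sum_{j=1}^N u_{ij})^{N+1} = 0$ in $\tilde R_N$, so $\varphi$ is well defined), and $\varphi$ is injective. -/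
open MvPolynomial

/-- The ideal `(t₁^{N+1}, …, t_n^{N+1})` of `ℂ[t₁, …, t_n]`. -/
noncomputable def tIdeal (n N : ℕ) : Ideal (MvPolynomial (Fin n) ℂ) :=
  Ideal.span (Set.range fun i : Fin n => (X i : MvPolynomial (Fin n) ℂ) ^ (N + 1))

/-- The ideal `⟨u_{ij}² ⟩` of `ℂ[u_{ij} : 1 ≤ i ≤ n, 1 ≤ j ≤ N]`. -/
noncomputable def uIdeal (n N : ℕ) : Ideal (MvPolynomial (Fin n × Fin N) ℂ) :=
  Ideal.span (Set.range fun p : Fin n × Fin N => (X p : MvPolynomial (Fin n × Fin N) ℂ) ^ 2)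

/-- `R_N = ℂ[t₁,…,t_n]/(t₁^{N+1},…,t_n^{N+1})`. -/
abbrev RN (n N : ℕ) : Type := MvPolynomial (Fin n) ℂ ⧸ tIdeal n N

/-- `R̃_N = ℂ[u_{ij}]/⟨u_{ij}²⟩`. -/
abbrev RtildeN (n N : ℕ) : Type := MvPolynomial (Fin n × Fin N) ℂ ⧸ uIdeal n N

/-- The class of `tᵢ` in `R_N`. -/
noncomputable def tcl (n N : ℕ) (i : Fin n) : RN n N :=
  Ideal.Quotient.mk (tIdeal n N) (X i)

/-- The class of `u_{ij}` in `R̃_N`. -/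
noncomputable def ucl (n N : ℕ) (i : Fin n) (j : Fin N) : RtildeN n N :=
  Ideal.Quotient.mk (uIdeal n N) (X (i, j))

/-- `P_i = ∑_j u_{ij}` as a polynomial. -/

noncomputable def Psum (n N : ℕ) (i : Fin n) : MvPolynomial (Fin n × Fin N) ℂ :=
  ∑ j : Fin N, X (i, j)

lemma Psum_pow_mem (n N : ℕ) (i : Fin n) : Psum n N i ^ (N + 1) ∈ uIdeal n N := by
  have h := Ideal.sum_pow_mem_span_pow (Finset.univ : Finset (Fin N))
    (fun j => (X (i, j) : MvPolynomial (Fin n × Fin N) ℂ)) 1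
  simp only [Finset.card_univ, Fintype.card_fin, mul_one] at h
  refine Ideal.span_mono ?_ h
  rintro _ ⟨j, -, rfl⟩
  exact ⟨(i, j), rfl⟩

/-- The square-free exponent associated to a system of subsets. -/

noncomputable def Dset (n N : ℕ) (S : Fin n → Finset (Fin N)) : (Fin n × Fin N) →₀ ℕ :=
  ∑ i : Fin n, ∑ j ∈ S i, Finsupp.single (i, j) 1

lemma Dset_apply (n N : ℕ) (S : Fin n → Finset (Fin N)) (p : Fin n × Fin N) :
    Dset n N S p = if p.2 ∈ S p.1 then 1 else 0 := by
  classical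
  obtain ⟨i, j⟩ := p
  simp only [Dset, Finsupp.finset_sum_apply, Finsupp.single_apply, Prod.mk.injEq]
  rw [Finset.sum_eq_single i]
  · simp
  · intro b _ hb
    apply Finset.sum_eq_zero
    intro j' _
    simp [hb]
  · simp

lemma Dset_le_one (n N : ℕ) (S : Fin n → Finset (Fin N)) (p : Fin n × Fin N) :
    Dset n N S p ≤ 1 := by
  rw [Dset_apply]; split <;> simp

lemma mem_support_Dset (n N : ℕ) (S : Fin n → Finset (Fin N)) (p : Fin n × Fin N) :
    p ∈ (Dset n N S).support ↔ p.2 ∈ S p.1 := by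
  rw [Finsupp.mem_support_iff, Dset_apply]
  split <;> simp_all

lemma coeff_eq_zero_of_mem_uIdeal (n N : ℕ) {q : MvPolynomial (Fin n × Fin N) ℂ}
    (hq : q ∈ uIdeal n N) {d : (Fin n × Fin N) →₀ ℕ} (hd : ∀ p, d p ≤ 1) :
    coeff d q = 0 := by
  classical
  rw [uIdeal, Ideal.mem_span_range_iff_exists_fun] at hq
  obtain ⟨c, rfl⟩ := hq
  rw [coeff_sum]
  apply Finset.sum_eq_zero
  intro p _
  rw [pow_two, ← mul_assoc, coeff_mul_X']
  split
  · rename_i hp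
    rw [coeff_mul_X']
    rw [if_neg]
    simp only [Finsupp.mem_support_iff, Finsupp.tsub_apply, Finsupp.single_eq_same, ne_eq,
      not_not]
    have := hd p
    omega
  · rfl

/-- The row-weight. -/

noncomputable def wt (n N : ℕ) : Fin n × Fin N → (Fin n →₀ ℕ) := fun p => Finsupp.single p.1 1

lemma weight_single_one (n N : ℕ) (p : Fin n × Fin N) :
    (Finsupp.weight (wt n N)) (Finsupp.single p 1) = Finsupp.single p.1 1 := by
  rw [Finsupp.weight_apply, Finsupp.sum_single_index] <;> simp [wt]

lemma weight_Dset (n N : ℕ) (S : Fin n → Finset (Fin N)) :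
    (Finsupp.weight (wt n N)) (Dset n N S) = ∑ i : Fin n, Finsupp.single i ((S i).card) := by
  rw [Dset, map_sum]
  refine Finset.sum_congr rfl fun i _ => ?_
  rw [map_sum]
  rw [Finset.sum_congr rfl fun j _ => weight_single_one n N (i, j)]
  simp [Finset.sum_const, Finsupp.smul_single]

lemma isWH_Psum (n N : ℕ) (i : Fin n) :
    IsWeightedHomogeneous (wt n N) (Psum n N i) (Finsupp.single i 1) :=
  IsWeightedHomogeneous.sum _ _ _ fun j _ => isWeightedHomogeneous_X ℂ _ (i, j)

lemma isWH_pow {σ M R : Type*} [CommSemiring R] [AddCommMonoid M] {w : σ → M}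
    {φ : MvPolynomial σ R} {m : M} (h : IsWeightedHomogeneous w φ m) (k : ℕ) :
    IsWeightedHomogeneous w (φ ^ k) (k • m) := by
  induction k with
  | zero => simpa using isWeightedHomogeneous_one R w
  | succ k ih =>
    rw [pow_succ, succ_nsmul]
    exact ih.mul h

lemma isWH_prod_pow (n N : ℕ) (a : Fin n → ℕ) :
    IsWeightedHomogeneous (wt n N) (∏ i : Fin n, Psum n N i ^ a i)
      (∑ i : Fin n, Finsupp.single i (a i)) := by
  refine IsWeightedHomogeneous.prod _ _ (fun i => Finsupp.single i (a i)) fun i _ => ?_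
  have := isWH_pow (isWH_Psum n N i) (a i)
  simpa [Finsupp.smul_single] using this

lemma Dset_sub_single (n N : ℕ) (S : Fin n → Finset (Fin N)) (i0 : Fin n) (j : Fin N)
    (hj : j ∈ S i0) :
    Dset n N S - Finsupp.single (i0, j) 1
      = Dset n N (Function.update S i0 ((S i0).erase j)) := by
  ext p
  obtain ⟨i, j'⟩ := p
  rw [Finsupp.tsub_apply, Dset_apply, Dset_apply, Finsupp.single_apply]
  by_cases hi : i = i0
  · subst hi
    rw [Function.update_self]
    by_cases hjj : j' = j
    · subst hjj; simp [hj]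
    · simp [Finset.mem_erase, hjj, Ne.symm hjj, Prod.ext_iff]
  · rw [Function.update_of_ne hi]
    simp [Prod.ext_iff, Ne.symm hi, hi]

lemma coeff_Dset_prod (n N : ℕ) : ∀ (k : ℕ) (a : Fin n → ℕ) (S : Fin n → Finset (Fin N)),
    (∀ i, (S i).card = a i) → (∑ i, a i = k) →
    coeff (Dset n N S) (∏ i : Fin n, Psum n N i ^ a i)
      = ((∏ i : Fin n, Nat.factorial (a i) : ℕ) : ℂ) := by
  intro k
  induction k with
  | zero =>
    intro a S hcard hsum
    have ha : ∀ i, a i = 0 := by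
      intro i
      exact Finset.sum_eq_zero_iff.mp hsum i (Finset.mem_univ i)
    have hS : ∀ i, S i = ∅ := by
      intro i
      rw [← Finset.card_eq_zero, hcard, ha]
    have hD : Dset n N S = 0 := by
      ext p; rw [Dset_apply, hS]; simp
    simp [hD, ha, coeff_one]
  | succ k ih =>
    intro a S hcard hsum
    -- find a row with positive exponent
    have hex : ∃ i0, a i0 ≠ 0 := by
      by_contra h
      push_neg at h
      simp [h] at hsum
    obtain ⟨i0, hi0⟩ := hex
    set a' : Fin n → ℕ := Function.update a i0 (a i0 - 1) with ha'
    -- split the product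
    have hsplit : (∏ i : Fin n, Psum n N i ^ a i)
        = Psum n N i0 * ∏ i : Fin n, Psum n N i ^ a' i := by
      have h1 : (fun i : Fin n => Psum n N i ^ a' i)
          = Function.update (fun i => Psum n N i ^ a i) i0 (Psum n N i0 ^ (a i0 - 1)) := by
        funext i
        by_cases hi : i = i0
        · subst hi; simp [ha']
        · simp [ha', hi, Function.update_of_ne hi]
      rw [h1, Finset.prod_update_of_mem (Finset.mem_univ i0), ← Finset.erase_eq,
        ← Finset.mul_prod_erase Finset.univ _ (Finset.mem_univ i0), ← mul_assoc,
        ← pow_succ']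
      congr 2
      omega
    rw [hsplit, Psum, Finset.sum_mul, coeff_sum]
    have hterm : ∀ j : Fin N,
        coeff (Dset n N S) ((X (i0, j) : MvPolynomial (Fin n × Fin N) ℂ)
          * ∏ i : Fin n, Psum n N i ^ a' i)
        = if j ∈ S i0 then ((∏ i : Fin n, Nat.factorial (a' i) : ℕ) : ℂ) else 0 := by
      intro j
      rw [coeff_X_mul']
      simp only [mem_support_Dset]
      by_cases hj : j ∈ S i0
      · rw [if_pos hj, if_pos hj, Dset_sub_single n N S i0 j hj]
        apply ih
        · intro i
          by_cases hi : i = i0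
          · subst hi
            simp [Finset.card_erase_of_mem hj, hcard, ha']
          · simp [Function.update_of_ne hi, hcard, ha', hi]
        · have h1 : ∑ i, a' i = (∑ i, a i) - 1 := by
            rw [ha', Finset.sum_update_of_mem (Finset.mem_univ i0),
              ← Finset.add_sum_erase Finset.univ a (Finset.mem_univ i0)]
            simp only [← Finset.erase_eq]
            omega
          omega
      · rw [if_neg hj, if_neg hj]
    rw [Finset.sum_congr rfl fun j _ => hterm j]
    rw [Finset.sum_ite_mem, Finset.univ_inter, Finset.sum_const, hcard i0]
    -- now : a i0 • (∏ a'!) = ∏ a !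
    have hfact : a i0 * ∏ i : Fin n, Nat.factorial (a' i) = ∏ i : Fin n, Nat.factorial (a i) := by
      rw [← Finset.mul_prod_erase Finset.univ (fun i => Nat.factorial (a' i)) (Finset.mem_univ i0),
        ← Finset.mul_prod_erase Finset.univ (fun i => Nat.factorial (a i)) (Finset.mem_univ i0),
        ← mul_assoc]
      have h2 : ∀ i ∈ Finset.univ.erase i0, Nat.factorial (a' i) = Nat.factorial (a i) := by
        intro i hi
        rw [ha', Function.update_of_ne (Finset.mem_erase.mp hi).1]
      rw [Finset.prod_congr rfl h2]
      congr 1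
      rw [ha', Function.update_self]
      exact Nat.mul_factorial_pred hi0
    rw [← hfact]
    push_cast
    ring

/-- The lift `ℂ[t] → ℂ[u]` of `φ`. -/

noncomputable def psiHat (n N : ℕ) : MvPolynomial (Fin n) ℂ →ₐ[ℂ] MvPolynomial (Fin n × Fin N) ℂ :=
  aeval fun i => Psum n N i

lemma psiHat_monomial (n N : ℕ) (b : Fin n →₀ ℕ) :
    psiHat n N (monomial b 1) = ∏ i : Fin n, Psum n N i ^ b i := by
  rw [psiHat, aeval_monomial, map_one, one_mul, Finsupp.prod_pow]

/-- The canonical squarefree set system for an admissible exponent `b`. -/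

noncomputable def Sb (n N : ℕ) (b : Fin n →₀ ℕ) (hb : ∀ i, b i ≤ N) : Fin n → Finset (Fin N) :=
  fun i => (Finset.range (b i)).attachFin
    (fun m hm => lt_of_lt_of_le (Finset.mem_range.mp hm) (hb i))

lemma card_Sb (n N : ℕ) (b : Fin n →₀ ℕ) (hb : ∀ i, b i ≤ N) (i : Fin n) :
    (Sb n N b hb i).card = b i := by
  rw [Sb, Finset.card_attachFin, Finset.card_range]

lemma coeff_Dset_psiHat_monomial (n N : ℕ) (b : Fin n →₀ ℕ) (hb : ∀ i, b i ≤ N)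
    (c : Fin n →₀ ℕ) :
    coeff (Dset n N (Sb n N b hb)) (psiHat n N (monomial c 1))
      = if c = b then ((∏ i : Fin n, Nat.factorial (b i) : ℕ) : ℂ) else 0 := by
  rw [psiHat_monomial]
  by_cases hc : c = b
  · subst hc
    rw [if_pos rfl]
    exact coeff_Dset_prod n N (∑ i, c i) (fun i => c i) _ (card_Sb n N c hb) rfl
  · rw [if_neg hc]
    by_contra h
    apply hc
    have h1 := isWH_prod_pow n N (fun i => c i) h
    rw [weight_Dset] at h1
    have h2 : ∀ (d : Fin n →₀ ℕ), ∑ i : Fin n, Finsupp.single i (d i) = d :=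
      fun d => Finsupp.univ_sum_single d
    rw [Finset.sum_congr rfl fun i _ => by rw [card_Sb n N b hb i], h2 c, h2 b] at h1
    exact h1.symm

lemma coeff_Dset_psiHat (n N : ℕ) (f : MvPolynomial (Fin n) ℂ) (b : Fin n →₀ ℕ)
    (hb : ∀ i, b i ≤ N) :
    coeff (Dset n N (Sb n N b hb)) (psiHat n N f)
      = coeff b f * ((∏ i : Fin n, Nat.factorial (b i) : ℕ) : ℂ) := by
  classical
  conv_lhs => rw [f.as_sum]
  rw [map_sum, coeff_sum]
  have hterm : ∀ c ∈ f.support,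
      coeff (Dset n N (Sb n N b hb)) (psiHat n N (monomial c (coeff c f)))
      = if c = b then coeff c f * ((∏ i : Fin n, Nat.factorial (b i) : ℕ) : ℂ) else 0 := by
    intro c _
    have : (monomial c) (coeff c f) = coeff c f • (monomial c) (1 : ℂ) := by
      rw [smul_monomial, smul_eq_mul, mul_one]
    rw [this, map_smul, coeff_smul, coeff_Dset_psiHat_monomial n N b hb c, smul_eq_mul]
    split <;> simp
  rw [Finset.sum_congr rfl hterm, Finset.sum_ite_eq' f.support b]
  split
  · rfl
  · rename_i hbs
    rw [notMem_support_iff.mp hbs, zero_mul]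

lemma mem_tIdeal_of_psiHat_mem (n N : ℕ) (f : MvPolynomial (Fin n) ℂ)
    (hf : psiHat n N f ∈ uIdeal n N) : f ∈ tIdeal n N := by
  classical
  have hcoeff : ∀ b : Fin n →₀ ℕ, (∀ i, b i ≤ N) → coeff b f = 0 := by
    intro b hb
    have h1 := coeff_Dset_psiHat n N f b hb
    rw [coeff_eq_zero_of_mem_uIdeal n N hf (Dset_le_one n N (Sb n N b hb))] at h1
    have h2 : ((∏ i : Fin n, Nat.factorial (b i) : ℕ) : ℂ) ≠ 0 := by
      simp only [ne_eq, Nat.cast_eq_zero]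
      exact Finset.prod_ne_zero_iff.mpr fun i _ => Nat.factorial_ne_zero (b i)
    exact (mul_eq_zero.mp h1.symm).resolve_right h2
  rw [f.as_sum]
  apply Ideal.sum_mem
  intro b hbs
  by_cases hadm : ∀ i, b i ≤ N
  · exact absurd (hcoeff b hadm) (mem_support_iff.mp hbs)
  · push_neg at hadm
    obtain ⟨i, hi⟩ := hadm
    have hle : Finsupp.single i (N + 1) ≤ b := by
      rw [Finsupp.single_le_iff]
      omega
    have hmon : (monomial b) (coeff b f)
        = monomial (b - Finsupp.single i (N + 1)) (coeff b f) * X i ^ (N + 1) := by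
      rw [X_pow_eq_monomial, monomial_mul, mul_one, tsub_add_cancel_of_le hle]
    rw [hmon]
    exact Ideal.mul_mem_left _ _ (Ideal.subset_span ⟨i, rfl⟩)

lemma psiHat_mem_uIdeal_of_mem_tIdeal (n N : ℕ) (g : MvPolynomial (Fin n) ℂ)
    (hg : g ∈ tIdeal n N) : psiHat n N g ∈ uIdeal n N := by
  have hle : tIdeal n N ≤ (uIdeal n N).comap (psiHat n N).toRingHom := by
    rw [tIdeal, Ideal.span_le]
    rintro _ ⟨i, rfl⟩
    simp only [SetLike.mem_coe, Ideal.mem_comap, AlgHom.toRingHom_eq_coe, RingHom.coe_coe,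
      map_pow]
    have : psiHat n N (X i) = Psum n N i := aeval_X _ i
    rw [this]
    exact Psum_pow_mem n N i
  exact hle hg

noncomputable def phi0 (n N : ℕ) : RN n N →ₐ[ℂ] RtildeN n N :=
  Ideal.Quotient.liftₐ (tIdeal n N)
    ((Ideal.Quotient.mkₐ ℂ (uIdeal n N)).comp (psiHat n N))
    (fun a ha => by
      simp only [AlgHom.comp_apply, Ideal.Quotient.mkₐ_eq_mk]
      rw [Ideal.Quotient.eq_zero_iff_mem]
      exact psiHat_mem_uIdeal_of_mem_tIdeal n N a ha)

lemma phi0_mk (n N : ℕ) (f : MvPolynomial (Fin n) ℂ) :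
    phi0 n N (Ideal.Quotient.mk (tIdeal n N) f)
      = Ideal.Quotient.mk (uIdeal n N) (psiHat n N f) := by
  simp [phi0, Ideal.Quotient.liftₐ_apply, Ideal.Quotient.lift_mk]
  rfl

lemma mk_Psum (n N : ℕ) (i : Fin n) :
    Ideal.Quotient.mk (uIdeal n N) (Psum n N i) = ∑ j : Fin N, ucl n N i j := by
  rw [Psum, map_sum]
  rfl

lemma phi0_prop (n N : ℕ) (i : Fin n) :
    phi0 n N (tcl n N i) = ∑ j : Fin N, ucl n N i j := by
  rw [tcl, phi0_mk]
  have : psiHat n N (X i) = Psum n N i := aeval_X _ i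
  rw [this, mk_Psum]

lemma hom_unique (n N : ℕ) (φ : RN n N →ₐ[ℂ] RtildeN n N)
    (hφ : ∀ i : Fin n, φ (tcl n N i) = ∑ j : Fin N, ucl n N i j) : φ = phi0 n N := by
  apply Ideal.Quotient.algHom_ext
  apply MvPolynomial.algHom_ext
  intro i
  simp only [AlgHom.comp_apply, Ideal.Quotient.mkₐ_eq_mk]
  show φ (tcl n N i) = phi0 n N (tcl n N i)
  rw [hφ i, phi0_prop]

/-- Fix positive integers `n` and `N`.  In `R̃_N` one has `(∑_j u_{ij})^{N+1} = 0`;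
there is a unique `ℂ`-algebra homomorphism
`φ : ℂ[t₁,…,t_n]/(tᵢ^{N+1}) → R̃_N` with `φ(tᵢ) = ∑_{j=1}^N u_{ij}` for each `i`
(so `φ` is well defined), and `φ` is injective. -/
theorem factoring_hom_exists_unique_injective (n N : ℕ) (hn : 0 < n) (hN : 0 < N) :
    (∀ i : Fin n, (∑ j : Fin N, ucl n N i j) ^ (N + 1) = 0) ∧
    (∃! φ : RN n N →ₐ[ℂ] RtildeN n N, ∀ i : Fin n, φ (tcl n N i) = ∑ j : Fin N, ucl n N i j) ∧
    (∀ φ : RN n N →ₐ[ℂ] RtildeN n N,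
      (∀ i : Fin n, φ (tcl n N i) = ∑ j : Fin N, ucl n N i j) → Function.Injective φ) := by
  have hinj : Function.Injective (phi0 n N) := by
    rw [injective_iff_map_eq_zero]
    intro a ha
    obtain ⟨f, rfl⟩ := Ideal.Quotient.mk_surjective a
    rw [phi0_mk, Ideal.Quotient.eq_zero_iff_mem] at ha
    rw [Ideal.Quotient.eq_zero_iff_mem]
    exact mem_tIdeal_of_psiHat_mem n N f ha
  refine ⟨?_, ⟨phi0 n N, phi0_prop n N, fun φ hφ => hom_unique n N φ hφ⟩, ?_⟩
  · intro i
    rw [← mk_Psum, ← map_pow, Ideal.Quotient.eq_zero_iff_mem]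
    exact Psum_pow_mem n N i
  · intro φ hφ
    rw [hom_unique n N φ hφ]
    exact hinj
end
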